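/- Let p be a prime, E a finite extension of ℚ_p with ring of integers 𝒪 and residue field k, and let R be a complete Noetherian local 𝒪-algebra with residue field k. Let C• be a cochain complex of finite R-modules and let T ∈ End_R(C•) be a chain endomorphism. Then, decomposing each term C^i into its ordinary and non-ordinary parts with respect to T^i, one obtains a decomposition C• = C•_ord ⊕ C•_non-ord of complexes of R-modules, and for each integer i there are canonical isomorphisms H^i(C•_ord) ≅ H^i(C•)_ord and H^i(C•_non-ord) ≅ H^i(C•)_non-ord, where the right-hand sides are the ordinary and non-ordinary parts of H^i(C•) with respect to the endomorphism induced by T. -/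

import Mathlib

open CategoryTheory IsLocalRing

set_option linter.unusedSectionVars false
set_option maxHeartbeats 1000000

section ModuleAux

variable {R : Type} [CommRing R]

lemma decomp_unique {M : Type} [AddCommGroup M] [Module R M]
    {P Q : Submodule R M} (hdisj : Disjoint P Q) {a b a' b' : M}
    (ha : a ∈ P) (hb : b ∈ Q) (ha' : a' ∈ P) (hb' : b' ∈ Q)
    (h : a + b = a' + b') : a = a' ∧ b = b' := by
  have h1 : a - a' = b' - b := by
    rw [sub_eq_sub_iff_add_eq_add, h, add_comm]
  have h2 : a - a' = 0 := Submodule.disjoint_def.mp hdisj _ (sub_mem ha ha')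
    (h1 ▸ sub_mem hb' hb)
  constructor
  · exact sub_eq_zero.mp h2
  · have := h1 ▸ h2
    exact (sub_eq_zero.mp this).symm

lemma compl_smul_inf {M : Type} [AddCommGroup M] [Module R M]
    {P Q : Submodule R M} (hc : IsCompl P Q) (I : Ideal R) {x : M}
    (hx : x ∈ I • (⊤ : Submodule R M)) (hxQ : x ∈ Q) : x ∈ I • Q := by
  have htop : (⊤ : Submodule R M) = P ⊔ Q := hc.sup_eq_top.symm
  rw [htop, Submodule.smul_sup] at hx
  obtain ⟨a, ha, b, hb, rfl⟩ := Submodule.mem_sup.mp hx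
  have haP : a ∈ P := Submodule.smul_le_right ha
  have hbQ : b ∈ Q := Submodule.smul_le_right hb
  have ha0 : a = 0 := Submodule.disjoint_def.mp hc.disjoint _ haP
    (by simpa using sub_mem hxQ hbQ)
  simpa [ha0] using hb

section
variable [IsLocalRing R] [IsNoetherianRing R]
variable {M : Type} [AddCommGroup M] [Module R M]

lemma krull_zero [Module.Finite R M] {x : M}
    (h : ∀ n : ℕ, x ∈ (maximalIdeal R) ^ n • (⊤ : Submodule R M)) : x = 0 := by
  have hbot := Ideal.iInf_pow_smul_eq_bot_of_isLocalRing
    (I := maximalIdeal R) (M := M) (Ideal.IsMaximal.ne_top inferInstance)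
  have : x ∈ (⨅ n : ℕ, (maximalIdeal R) ^ n • (⊤ : Submodule R M)) :=
    Submodule.mem_iInf _ |>.mpr h
  rw [hbot] at this
  simpa using this

omit [IsLocalRing R] [IsNoetherianRing R] in
lemma map_ord_eq {T : Module.End R M} {P : Submodule R M}
    (hle : Submodule.map T P ≤ P) (hsurj : ∀ y ∈ P, ∃ x ∈ P, T x = y) :
    Submodule.map T P = P := by
  refine le_antisymm hle fun y hy => ?_
  obtain ⟨x, hx, hxy⟩ := hsurj y hy
  exact ⟨x, hx, hxy⟩

lemma map_pow_ord_eq {T : Module.End R M} {P : Submodule R M}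
    (hle : Submodule.map T P ≤ P) (hsurj : ∀ y ∈ P, ∃ x ∈ P, T x = y) (N : ℕ) :
    Submodule.map (T ^ N) P = P := by
  induction N with
  | zero => simp [Module.End.one_eq_id]
  | succ n ih =>
      rw [pow_succ, Module.End.mul_eq_comp, Submodule.map_comp,
        map_ord_eq hle hsurj, ih]

lemma map_pow_le {T : Module.End R M} {P : Submodule R M}
    (hle : Submodule.map T P ≤ P) (N : ℕ) :
    Submodule.map (T ^ N) P ≤ P := by
  induction N with
  | zero => simp [Module.End.one_eq_id]
  | succ n ih =>
      rw [pow_succ, Module.End.mul_eq_comp, Submodule.map_comp]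
      exact le_trans (Submodule.map_mono hle) ih

lemma ord_smul_cancel {T : Module.End R M} {P : Submodule R M}
    (hle : Submodule.map T P ≤ P) (hsurj : ∀ y ∈ P, ∃ x ∈ P, T x = y)
    (hinj : ∀ x ∈ P, T x = 0 → x = 0) (I : Ideal R) :
    ∀ N : ℕ, ∀ y ∈ P, (T ^ N) y ∈ I • P → y ∈ I • P := by
  intro N
  induction N with
  | zero => intro y _ h; simpa using h
  | succ n ih =>
      intro y hy h
      have h1 : T y ∈ I • P := by
        apply ih _ (hle ⟨y, hy, rfl⟩)
        rw [pow_succ] at h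
        simpa [Module.End.mul_apply] using h
      have hIP : I • P = Submodule.map T (I • P) := by
        conv_lhs => rw [← map_ord_eq hle hsurj]
        rw [Submodule.map_smul'']
      rw [hIP] at h1
      obtain ⟨u, hu, huy⟩ := h1
      have huP : u ∈ P := Submodule.smul_le_right hu
      have : y - u = 0 := hinj _ (sub_mem hy huP) (by rw [map_sub, huy, sub_self])
      rw [sub_eq_zero] at this
      rwa [this]

end
end ModuleAux

/-- An ordinary decomposition of `M` with respect to `T`: a `T`-invariant direct sum
decomposition `M = M_ord ⊕ M_non-ord` such that `T` is invertible on `M_ord` and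
topologically nilpotent on `M_non-ord` for the `𝔪_R`-adic topology. -/
def IsOrdinaryDecomp {R : Type} [CommRing R] [IsLocalRing R] {M : Type} [AddCommGroup M]
    [Module R M] (T : Module.End R M) (Mo Mn : Submodule R M) : Prop :=
  IsCompl Mo Mn ∧
  Submodule.map T Mo ≤ Mo ∧ Submodule.map T Mn ≤ Mn ∧
  (∀ y ∈ Mo, ∃ x ∈ Mo, T x = y) ∧ (∀ x ∈ Mo, T x = 0 → x = 0) ∧
  (∀ n : ℕ, ∃ N : ℕ, Submodule.map (T ^ N) Mn ≤ (IsLocalRing.maximalIdeal R) ^ n • Mn)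

/-- The subcomplex of `C` determined by a family of submodules preserved by the
differentials. -/
noncomputable def subCx {R : Type} [CommRing R] (C : CochainComplex (ModuleCat R) ℤ)
    (P : ∀ i : ℤ, Submodule R (C.X i))
    (hP : ∀ i j : ℤ, Submodule.map (C.d i j).hom (P i) ≤ P j) :
    CochainComplex (ModuleCat R) ℤ where
  X i := ModuleCat.of R (P i)
  d i j := ModuleCat.ofHom (LinearMap.restrict (C.d i j).hom (fun x hx => hP i j (Submodule.mem_map_of_mem hx)))
  shape i j h := by
    refine ModuleCat.hom_ext (LinearMap.ext fun x => Subtype.ext ?_)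
    have h0 : C.d i j = 0 := C.shape i j h
    show (C.d i j).hom x.1 = _
    rw [h0]
    rfl
  d_comp_d' i j k hij hjk := by
    refine ModuleCat.hom_ext (LinearMap.ext fun x => Subtype.ext ?_)
    have h : (C.d i j ≫ C.d j k) = 0 := C.d_comp_d i j k
    show (C.d j k).hom ((C.d i j).hom x.1) = _
    calc (C.d j k).hom ((C.d i j).hom x.1) = (C.d i j ≫ C.d j k).hom x.1 := rfl
      _ = _ := by rw [h]; rfl


section Functorial

variable {R : Type} [CommRing R] [IsLocalRing R] [IsNoetherianRing R]
variable {M M' : Type} [AddCommGroup M] [Module R M] [AddCommGroup M'] [Module R M']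

lemma comm_pow (T : Module.End R M) (T' : Module.End R M') (f : M →ₗ[R] M')
    (hcomm : ∀ x, f (T x) = T' (f x)) (N : ℕ) (x : M) :
    f ((T ^ N) x) = (T' ^ N) (f x) := by
  induction N generalizing x with
  | zero => simp
  | succ n ih =>
      rw [pow_succ, pow_succ, Module.End.mul_apply, Module.End.mul_apply, ih (T x), hcomm]

lemma map_ord_le [Module.Finite R M']
    (T : Module.End R M) (T' : Module.End R M') (f : M →ₗ[R] M')
    {Mo Mn : Submodule R M} {Mo' Mn' : Submodule R M'}
    (hM : IsOrdinaryDecomp T Mo Mn) (hM' : IsOrdinaryDecomp T' Mo' Mn')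
    (hcomm : ∀ x, f (T x) = T' (f x)) :
    Submodule.map f Mo ≤ Mo' := by
  obtain ⟨hc, hleo, hlen, hsurj, hinj, hnil⟩ := hM
  obtain ⟨hc', hleo', hlen', hsurj', hinj', hnil'⟩ := hM'
  rintro _ ⟨x, hx, rfl⟩
  have hmem : f x ∈ Mo' ⊔ Mn' := hc'.sup_eq_top ▸ Submodule.mem_top
  obtain ⟨a, ha, b, hb, hab⟩ := Submodule.mem_sup.mp hmem
  have hb0 : b = 0 := by
    apply krull_zero (R := R)
    intro n
    obtain ⟨N, hN⟩ := hnil' n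
    have hxmem : x ∈ Submodule.map (T ^ N) Mo := by
      rw [map_pow_ord_eq hleo hsurj N]; exact hx
    obtain ⟨u, hu, huz⟩ := hxmem
    have hfu : f u ∈ Mo' ⊔ Mn' := hc'.sup_eq_top ▸ Submodule.mem_top
    obtain ⟨vo, hvo, vn, hvn, hv⟩ := Submodule.mem_sup.mp hfu
    have key : a + b = (T' ^ N) vo + (T' ^ N) vn := by
      rw [hab, ← huz, comm_pow T T' f hcomm, ← hv, map_add]
    have h1 : (T' ^ N) vo ∈ Mo' := map_pow_le hleo' N ⟨vo, hvo, rfl⟩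
    have h2 : (T' ^ N) vn ∈ (maximalIdeal R) ^ n • Mn' := hN ⟨vn, hvn, rfl⟩
    have huniq := decomp_unique hc'.disjoint ha hb h1 (Submodule.smul_le_right h2) key
    rw [huniq.2]
    exact Submodule.smul_mono le_rfl le_top h2
  have : f x = a := by rw [← hab, hb0, add_zero]
  rw [this]; exact ha

lemma map_nonord_le [Module.Finite R M']
    (T : Module.End R M) (T' : Module.End R M') (f : M →ₗ[R] M')
    {Mo Mn : Submodule R M} {Mo' Mn' : Submodule R M'}
    (hM : IsOrdinaryDecomp T Mo Mn) (hM' : IsOrdinaryDecomp T' Mo' Mn')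
    (hcomm : ∀ x, f (T x) = T' (f x)) :
    Submodule.map f Mn ≤ Mn' := by
  obtain ⟨hc, hleo, hlen, hsurj, hinj, hnil⟩ := hM
  obtain ⟨hc', hleo', hlen', hsurj', hinj', hnil'⟩ := hM'
  rintro _ ⟨x, hx, rfl⟩
  have hmem : f x ∈ Mo' ⊔ Mn' := hc'.sup_eq_top ▸ Submodule.mem_top
  obtain ⟨a, ha, b, hb, hab⟩ := Submodule.mem_sup.mp hmem
  have ha0 : a = 0 := by
    apply krull_zero (R := R)
    intro n
    obtain ⟨N, hN⟩ := hnil n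
    have h1 : f ((T ^ N) x) ∈ (maximalIdeal R) ^ n • (⊤ : Submodule R M') := by
      have hTx : (T ^ N) x ∈ (maximalIdeal R) ^ n • Mn := hN ⟨x, hx, rfl⟩
      have : f ((T ^ N) x) ∈ Submodule.map f ((maximalIdeal R) ^ n • Mn) :=
        ⟨_, hTx, rfl⟩
      rw [Submodule.map_smul''] at this
      exact Submodule.smul_mono le_rfl le_top this
    have htop : ((maximalIdeal R) ^ n • (⊤ : Submodule R M')) =
        (maximalIdeal R) ^ n • Mo' ⊔ (maximalIdeal R) ^ n • Mn' := by
      rw [← Submodule.smul_sup, hc'.sup_eq_top]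
    rw [htop] at h1
    obtain ⟨co, hco, cn, hcn, hcc⟩ := Submodule.mem_sup.mp h1
    have key : (T' ^ N) a + (T' ^ N) b = co + cn := by
      rw [← map_add, hab, ← comm_pow T T' f hcomm, ← hcc]
    have h2 : (T' ^ N) a ∈ Mo' := map_pow_le hleo' N ⟨a, ha, rfl⟩
    have h3 : (T' ^ N) b ∈ Mn' := map_pow_le hlen' N ⟨b, hb, rfl⟩
    have huniq := decomp_unique hc'.disjoint h2 h3
      (Submodule.smul_le_right hco) (Submodule.smul_le_right hcn) key
    have h4 : (T' ^ N) a ∈ (maximalIdeal R) ^ n • Mo' := huniq.1 ▸ hco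
    have h5 : a ∈ (maximalIdeal R) ^ n • Mo' :=
      ord_smul_cancel hleo' hsurj' hinj' _ N a ha h4
    exact Submodule.smul_mono le_rfl le_top h5
  have : f x = b := by rw [← hab, ha0, zero_add]
  rw [this]; exact hb

end Functorial

section PiS

open CategoryTheory.ShortComplex

variable {R : Type} [CommRing R]

noncomputable def piS (S : ShortComplex (ModuleCat.{0} R)) :
    S.moduleCatLeftHomologyData.K ⟶ S.homology :=
  S.moduleCatCyclesIso.inv ≫ S.homologyπ

lemma piS_surjective (S : ShortComplex (ModuleCat.{0} R)) : Function.Surjective (piS S).hom := by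
  have : Epi (piS S) := epi_comp _ _
  exact (ModuleCat.epi_iff_surjective _).mp this

lemma piS_eq_zero_iff {S : ShortComplex (ModuleCat.{0} R)} (z : LinearMap.ker S.g.hom) :
    (piS S).hom z = 0 ↔ ∃ w : S.X₁, S.f.hom w = (z : S.X₂) := by
  have h1 : piS S = S.moduleCatLeftHomologyData.π ≫ S.moduleCatHomologyIso.inv :=
    S.moduleCatCyclesIso_inv_π
  have hinj : Function.Injective S.moduleCatHomologyIso.inv.hom :=
    (ModuleCat.mono_iff_injective _).mp inferInstance
  rw [h1]
  change S.moduleCatHomologyIso.inv.hom (Submodule.Quotient.mk z) = 0 ↔ _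
  constructor
  · intro h
    have h0 : (Submodule.Quotient.mk z :
        LinearMap.ker S.g.hom ⧸ LinearMap.range S.moduleCatToCycles) = 0 := by
      apply hinj
      exact h.trans (map_zero _).symm
    have hz : z ∈ LinearMap.range S.moduleCatToCycles :=
      (Submodule.Quotient.mk_eq_zero _).mp h0
    obtain ⟨w, hw⟩ := hz
    exact ⟨w, by rw [← hw]; rfl⟩
  · rintro ⟨w, hw⟩
    have hz : (Submodule.Quotient.mk z :
        LinearMap.ker S.g.hom ⧸ LinearMap.range S.moduleCatToCycles) = 0 := by
      apply (Submodule.Quotient.mk_eq_zero _).mpr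
      exact ⟨w, Subtype.ext hw⟩
    rw [hz]
    exact map_zero _

lemma kermap_mem {S₁ S₂ : ShortComplex (ModuleCat.{0} R)} (φ : S₁ ⟶ S₂)
    (z : LinearMap.ker S₁.g.hom) : φ.τ₂.hom (z : S₁.X₂) ∈ LinearMap.ker S₂.g.hom := by
  have h : S₂.g.hom (φ.τ₂.hom (z : S₁.X₂)) = φ.τ₃.hom (S₁.g.hom (z : S₁.X₂)) :=
    LinearMap.congr_fun (congrArg ModuleCat.Hom.hom φ.comm₂₃) (z : S₁.X₂)
  have hz : S₁.g.hom (z : S₁.X₂) = 0 := z.2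
  rw [LinearMap.mem_ker, h, hz, map_zero]

noncomputable def kermap {S₁ S₂ : ShortComplex (ModuleCat.{0} R)} (φ : S₁ ⟶ S₂) :
    S₁.moduleCatLeftHomologyData.K ⟶ S₂.moduleCatLeftHomologyData.K :=
  ModuleCat.ofHom (LinearMap.restrict φ.τ₂.hom (fun x hx => kermap_mem φ ⟨x, hx⟩))

lemma piS_natural {S₁ S₂ : ShortComplex (ModuleCat.{0} R)} (φ : S₁ ⟶ S₂)
    (z : LinearMap.ker S₁.g.hom) :
    (ShortComplex.homologyMap φ).hom ((piS S₁).hom z) =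
      (piS S₂).hom ⟨φ.τ₂.hom (z : S₁.X₂), kermap_mem φ z⟩ := by
  have stepA : kermap φ ≫ S₂.moduleCatCyclesIso.inv =
      S₁.moduleCatCyclesIso.inv ≫ ShortComplex.cyclesMap φ := by
    rw [← cancel_mono S₂.iCycles, Category.assoc, Category.assoc,
      S₂.moduleCatCyclesIso_inv_iCycles, ShortComplex.cyclesMap_i,
      ← Category.assoc, S₁.moduleCatCyclesIso_inv_iCycles]
    rfl
  have stepB : kermap φ ≫ piS S₂ = piS S₁ ≫ ShortComplex.homologyMap φ := by
    dsimp only [piS]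
    rw [← Category.assoc, stepA, Category.assoc, ← ShortComplex.homologyπ_naturality,
      ← Category.assoc]
  exact (LinearMap.congr_fun (congrArg ModuleCat.Hom.hom stepB) z).symm

end PiS

section SubCxEquiv

variable {R : Type} [CommRing R]

lemma subcx_homology_equiv (C : CochainComplex (ModuleCat.{0} R) ℤ)
    (P Q : ∀ i : ℤ, Submodule R (C.X i))
    (hP : ∀ i j : ℤ, Submodule.map (C.d i j).hom (P i) ≤ P j)
    (hQ : ∀ i j : ℤ, Submodule.map (C.d i j).hom (Q i) ≤ Q j)
    (hcompl : ∀ i : ℤ, IsCompl (P i) (Q i)) (i : ℤ)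
    (Ho : Submodule R ↥((C.sc i).homology))
    (hHo : Ho = Submodule.map (piS (C.sc i)).hom
      ((P i).comap (LinearMap.ker (C.sc i).g.hom).subtype)) :
    Nonempty (↥((subCx C P hP).homology i) ≃ₗ[R] ↥Ho) := by
  classical
  set D := subCx C P hP with hD
  have hj : ∀ z : LinearMap.ker (D.sc i).g.hom,
      z.1.1 ∈ LinearMap.ker (C.sc i).g.hom := by
    intro z
    have hz : (D.sc i).g.hom z.1 = 0 := z.2
    have hz' : (C.sc i).g.hom z.1.1 = 0 := congrArg Subtype.val hz
    exact hz'
  let inc : ↥(LinearMap.ker (D.sc i).g.hom) →ₗ[R] ↥(LinearMap.ker (C.sc i).g.hom) :=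
    { toFun := fun z => ⟨z.1.1, hj z⟩
      map_add' := fun x y => Subtype.ext rfl
      map_smul' := fun r x => Subtype.ext rfl }
  let θ₀ : ↥(LinearMap.ker (D.sc i).g.hom) →ₗ[R] ↥((C.sc i).homology) :=
    (piS (C.sc i)).hom ∘ₗ inc
  have hrangemem : ∀ z, θ₀ z ∈ Ho := by
    intro z
    rw [hHo]
    exact ⟨inc z, z.1.2, rfl⟩
  let θ : ↥(LinearMap.ker (D.sc i).g.hom) →ₗ[R] ↥Ho := LinearMap.codRestrict Ho θ₀ hrangemem
  have hθsurj : Function.Surjective θ := by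
    intro y
    have hy : (y : ↥((C.sc i).homology)) ∈ Submodule.map
        (piS (C.sc i)).hom
        ((P i).comap (LinearMap.ker (C.sc i).g.hom).subtype) := by
      rw [← hHo]; exact y.2
    obtain ⟨w, hwP, hwπ⟩ := hy
    have hwcyc : (D.sc i).g.hom (⟨w.1, hwP⟩ : ↥(P i)) = 0 :=
      Subtype.ext (LinearMap.mem_ker.mp w.2)
    refine ⟨⟨⟨w.1, hwP⟩, LinearMap.mem_ker.mpr hwcyc⟩, ?_⟩
    apply Subtype.ext
    show θ₀ _ = (y : ↥((C.sc i).homology))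
    rw [← hwπ]
    exact congrArg (piS (C.sc i)).hom (Subtype.ext rfl)
  let πD : ↥(LinearMap.ker (D.sc i).g.hom) →ₗ[R] ↥((D.sc i).homology) := (piS (D.sc i)).hom
  have hker : LinearMap.ker πD =
      LinearMap.ker θ := by
    ext z
    have h1 : (piS (D.sc i)).hom z = 0 ↔ ∃ w : (D.sc i).X₁, (D.sc i).f.hom w = z.1 :=
      piS_eq_zero_iff z
    have h2 : θ z = 0 ↔ (piS (C.sc i)).hom (inc z) = 0 := by
      constructor
      · intro h; exact congrArg Subtype.val h
      · intro h; exact Subtype.ext h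
    have h3 : (piS (C.sc i)).hom (inc z) = 0 ↔
        ∃ w : C.X ((ComplexShape.up ℤ).prev i), (C.sc i).f.hom w = (inc z).1 :=
      piS_eq_zero_iff (inc z)
    constructor
    · intro hz
      obtain ⟨w, hw⟩ := h1.mp hz
      exact h2.mpr (h3.mpr ⟨w.1, congrArg Subtype.val hw⟩)
    · intro hz
      obtain ⟨w, hw⟩ := h3.mp (h2.mp hz)
      have hw' : w ∈ P ((ComplexShape.up ℤ).prev i) ⊔ Q ((ComplexShape.up ℤ).prev i) :=
        (hcompl _).sup_eq_top ▸ Submodule.mem_top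
      obtain ⟨a, ha, b, hb, hab⟩ := Submodule.mem_sup.mp hw'
      have hda : (C.d ((ComplexShape.up ℤ).prev i) i).hom a ∈ P i := hP _ i ⟨a, ha, rfl⟩
      have hdb : (C.d ((ComplexShape.up ℤ).prev i) i).hom b ∈ Q i := hQ _ i ⟨b, hb, rfl⟩
      have hsum : (C.d ((ComplexShape.up ℤ).prev i) i).hom a +
          (C.d ((ComplexShape.up ℤ).prev i) i).hom b = z.1.1 + 0 := by
        rw [add_zero, ← map_add, hab]
        exact hw
      have hz12 : z.1.1 ∈ P i := z.1.2
      have huniq := decomp_unique (R := R) (M := ↥(C.X i)) (hcompl i).disjoint hda hdb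
        hz12 (Submodule.zero_mem (Q i)) hsum
      exact h1.mpr ⟨⟨a, ha⟩, Subtype.ext huniq.1⟩
  have hπDsurj : Function.Surjective πD :=
    piS_surjective (D.sc i)
  exact ⟨(((LinearMap.quotKerEquivOfSurjective πD hπDsurj).symm.trans
    (Submodule.quotEquivOfEq _ _ hker)).trans
    (LinearMap.quotKerEquivOfSurjective θ hθsurj))⟩

end SubCxEquiv

theorem statement_13 (p : ℕ) [Fact p.Prime] (E : Type) [Field E] [Algebra ℚ_[p] E]
    [FiniteDimensional ℚ_[p] E] [Algebra ℤ_[p] E] [IsScalarTower ℤ_[p] ℚ_[p] E]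
    (R : Type) [CommRing R] [Algebra (integralClosure ℤ_[p] E) R]
    [IsNoetherianRing R] [IsLocalRing R] [IsAdicComplete (maximalIdeal R) R]
    (C : CochainComplex (ModuleCat R) ℤ) (hfin : ∀ i : ℤ, Module.Finite R (C.X i))
    (T : C ⟶ C)
    (Mo Mn : ∀ i : ℤ, Submodule R (C.X i))
    (hMi : ∀ i : ℤ, IsOrdinaryDecomp ((T.f i).hom : Module.End R (C.X i)) (Mo i) (Mn i)) :
    ∃ (hdo : ∀ i j : ℤ, Submodule.map (C.d i j).hom (Mo i) ≤ Mo j)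
      (hdn : ∀ i j : ℤ, Submodule.map (C.d i j).hom (Mn i) ≤ Mn j),
      ∀ i : ℤ, ∃ Ho Hn : Submodule R ↥(C.homology i),
        IsOrdinaryDecomp
          (((HomologicalComplex.homologyFunctor (ModuleCat R) (ComplexShape.up ℤ) i).map T :
            C.homology i ⟶ C.homology i).hom : Module.End R ↥(C.homology i)) Ho Hn ∧
        Nonempty (↥((subCx C Mo hdo).homology i) ≃ₗ[R] ↥Ho) ∧
        Nonempty (↥((subCx C Mn hdn).homology i) ≃ₗ[R] ↥Hn) := by
  have hcomm : ∀ (a b : ℤ) (x : C.X a),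
      (C.d a b).hom ((T.f a).hom x) = (T.f b).hom ((C.d a b).hom x) :=
    fun a b x => LinearMap.congr_fun (congrArg ModuleCat.Hom.hom (T.comm a b)) x
  have hdo : ∀ i j : ℤ, Submodule.map (C.d i j).hom (Mo i) ≤ Mo j := by
    intro a b
    haveI := hfin b
    exact map_ord_le (T.f a).hom (T.f b).hom (C.d a b).hom (hMi a) (hMi b) (hcomm a b)
  have hdn : ∀ i j : ℤ, Submodule.map (C.d i j).hom (Mn i) ≤ Mn j := by
    intro a b
    haveI := hfin b
    exact map_nonord_le (T.f a).hom (T.f b).hom (C.d a b).hom (hMi a) (hMi b) (hcomm a b)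
  refine ⟨hdo, hdn, fun i => ?_⟩
  haveI := hfin i
  classical
  let Z : Submodule R (C.X i) := LinearMap.ker (C.sc i).g.hom
  let π : ↥Z →ₗ[R] ↥(C.homology i) :=
    (piS (C.sc i)).hom
  let φT := (HomologicalComplex.shortComplexFunctor (ModuleCat R) (ComplexShape.up ℤ) i).map T
  let Thom : Module.End R ↥(C.homology i) :=
    (ShortComplex.homologyMap φT : (C.sc i).homology ⟶ (C.sc i).homology).hom
  let Te : Module.End R (C.X i) := (T.f i : C.X i ⟶ C.X i).hom
  have hTmem : ∀ z : ↥Z, Te z.1 ∈ Z := fun z => kermap_mem φT z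
  have hnat : ∀ z : ↥Z, Thom (π z) = π ⟨Te z.1, hTmem z⟩ := fun z => piS_natural φT z
  have hTmempow : ∀ (N : ℕ) (z : ↥Z), (Te ^ N) z.1 ∈ Z := by
    intro N
    induction N with
    | zero => intro z; simpa using z.2
    | succ n ih =>
        intro z
        rw [pow_succ', Module.End.mul_apply]
        exact hTmem ⟨(Te ^ n) z.1, ih z⟩
  have hnatpow : ∀ (N : ℕ) (z : ↥Z),
      (Thom ^ N) (π z) = π ⟨(Te ^ N) z.1, hTmempow N z⟩ := by
    intro N
    induction N with
    | zero =>
        intro z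
        have h1 : (Thom ^ 0) (π z) = π z := by rw [pow_zero, Module.End.one_apply]
        have h2 : z = (⟨(Te ^ 0) z.1, hTmempow 0 z⟩ : ↥Z) :=
          Subtype.ext (show (z : C.X i) = (Te ^ 0) z.1 by rw [pow_zero, Module.End.one_apply])
        exact h1.trans (congrArg π h2)
    | succ n ih =>
        intro z
        calc (Thom ^ (n + 1)) (π z) = Thom ((Thom ^ n) (π z)) := by
              rw [pow_succ', Module.End.mul_apply]
          _ = Thom (π ⟨(Te ^ n) z.1, hTmempow n z⟩) := by rw [ih z]
          _ = π ⟨Te ((Te ^ n) z.1), hTmem ⟨(Te ^ n) z.1, hTmempow n z⟩⟩ :=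
              hnat ⟨(Te ^ n) z.1, hTmempow n z⟩
          _ = π ⟨(Te ^ (n + 1)) z.1, hTmempow (n + 1) z⟩ :=
              congrArg π (Subtype.ext (show Te ((Te ^ n) z.1) = (Te ^ (n + 1)) z.1 by
                rw [pow_succ', Module.End.mul_apply]))
  -- decomposition of cycles
  have hsplit : ∀ x : C.X i, x ∈ Z →
      ∃ (a b : C.X i), a ∈ Mo i ∧ b ∈ Mn i ∧ a ∈ Z ∧ b ∈ Z ∧ a + b = x := by
    intro x hx
    have hx' : x ∈ Mo i ⊔ Mn i := (hMi i).1.sup_eq_top ▸ Submodule.mem_top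
    obtain ⟨a, ha, b, hb, hab⟩ := Submodule.mem_sup.mp hx'
    have hda : (C.d i ((ComplexShape.up ℤ).next i)).hom a ∈ Mo _ := hdo _ _ ⟨a, ha, rfl⟩
    have hdb : (C.d i ((ComplexShape.up ℤ).next i)).hom b ∈ Mn _ := hdn _ _ ⟨b, hb, rfl⟩
    have hdx : (C.d i ((ComplexShape.up ℤ).next i)).hom x = 0 := hx
    have hsum : (C.d i ((ComplexShape.up ℤ).next i)).hom a +
        (C.d i ((ComplexShape.up ℤ).next i)).hom b = 0 + 0 := by
      rw [add_zero, ← map_add, hab]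
      exact hdx
    have huniq := decomp_unique (hMi _).1.disjoint hda hdb
      (Submodule.zero_mem _) (Submodule.zero_mem _) hsum
    exact ⟨a, b, ha, hb, LinearMap.mem_ker.mpr huniq.1, LinearMap.mem_ker.mpr huniq.2, hab⟩
  -- boundary decomposition helper
  have hbdry : ∀ (w : C.X ((ComplexShape.up ℤ).prev i)) (xo xn : C.X i), xo ∈ Mo i → xn ∈ Mn i →
      (C.sc i).f.hom w = xo + xn →
      ∃ a, a ∈ Mo ((ComplexShape.up ℤ).prev i) ∧
        (C.d ((ComplexShape.up ℤ).prev i) i).hom a = xo := by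
    intro w xo xn hxo hxn hw
    have hw' : w ∈ Mo ((ComplexShape.up ℤ).prev i) ⊔ Mn ((ComplexShape.up ℤ).prev i) :=
      (hMi _).1.sup_eq_top ▸ Submodule.mem_top
    obtain ⟨a, ha, b, hb, hab⟩ := Submodule.mem_sup.mp hw'
    have hda : (C.d ((ComplexShape.up ℤ).prev i) i).hom a ∈ Mo i := hdo _ _ ⟨a, ha, rfl⟩
    have hdb : (C.d ((ComplexShape.up ℤ).prev i) i).hom b ∈ Mn i := hdn _ _ ⟨b, hb, rfl⟩
    have hsum : (C.d ((ComplexShape.up ℤ).prev i) i).hom a +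
        (C.d ((ComplexShape.up ℤ).prev i) i).hom b = xo + xn := by
      rw [← map_add, hab]
      exact hw
    have huniq := decomp_unique (hMi i).1.disjoint hda hdb hxo hxn hsum
    exact ⟨a, ha, huniq.1⟩
  let Ho : Submodule R ↥(C.homology i) := Submodule.map π ((Mo i).comap Z.subtype)
  let Hn : Submodule R ↥(C.homology i) := Submodule.map π ((Mn i).comap Z.subtype)
  have hcompl : IsCompl Ho Hn := by
    rw [isCompl_iff]
    constructor
    · rw [Submodule.disjoint_def]
      intro h hHo hHn
      obtain ⟨zo, hzo, hπo⟩ := hHo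
      obtain ⟨zn, hzn, hπn⟩ := hHn
      have h0 : π (zo - zn) = 0 := by rw [map_sub, hπo, hπn, sub_self]
      obtain ⟨w, hw⟩ := (piS_eq_zero_iff (S := C.sc i) (zo - zn)).mp h0
      obtain ⟨a, haMo, hda⟩ := hbdry w zo.1 (-zn.1) hzo (neg_mem hzn)
        (by rw [← sub_eq_add_neg]; exact hw)
      have hz0 : π zo = 0 := (piS_eq_zero_iff (S := C.sc i) zo).mpr ⟨a, hda⟩
      rw [← hπo, hz0]
    · rw [codisjoint_iff, eq_top_iff]
      intro h _
      obtain ⟨z, rfl⟩ := piS_surjective (C.sc i) h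
      obtain ⟨a, b, ha, hb, hZa, hZb, hab⟩ := hsplit z.1 z.2
      have hz : (⟨a, hZa⟩ + ⟨b, hZb⟩ : ↥Z) = z := Subtype.ext hab
      refine Submodule.mem_sup.mpr ⟨π ⟨a, hZa⟩, ⟨⟨a, hZa⟩, ha, rfl⟩,
        π ⟨b, hZb⟩, ⟨⟨b, hZb⟩, hb, rfl⟩, ?_⟩
      rw [← map_add]
      exact congrArg π hz
  have hmain : IsOrdinaryDecomp Thom Ho Hn := by
    refine ⟨hcompl, ?_, ?_, ?_, ?_, ?_⟩
    · rintro _ ⟨x, hx, rfl⟩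
      obtain ⟨z, hz, rfl⟩ := hx
      rw [hnat z]
      exact ⟨⟨Te z.1, hTmem z⟩, (hMi i).2.1 ⟨z.1, hz, rfl⟩, rfl⟩
    · rintro _ ⟨x, hx, rfl⟩
      obtain ⟨z, hz, rfl⟩ := hx
      rw [hnat z]
      exact ⟨⟨Te z.1, hTmem z⟩, (hMi i).2.2.1 ⟨z.1, hz, rfl⟩, rfl⟩
    · rintro y ⟨z, hz, rfl⟩
      obtain ⟨x, hxMo, hTx⟩ := (hMi i).2.2.2.1 z.1 hz
      have hdx0 : (C.d i ((ComplexShape.up ℤ).next i)).hom x = 0 := by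
        apply (hMi ((ComplexShape.up ℤ).next i)).2.2.2.2.1 _ (hdo _ _ ⟨x, hxMo, rfl⟩)
        rw [← hcomm, hTx]
        exact z.2
      have hxZ : x ∈ Z := LinearMap.mem_ker.mpr hdx0
      refine ⟨π ⟨x, hxZ⟩, ⟨⟨x, hxZ⟩, hxMo, rfl⟩, ?_⟩
      rw [hnat ⟨x, hxZ⟩]
      exact congrArg π (Subtype.ext hTx)
    · rintro y ⟨z, hz, rfl⟩ hTy0
      have h0 : π ⟨Te z.1, hTmem z⟩ = 0 := by rw [← hnat z]; exact hTy0
      obtain ⟨w, hw⟩ := (piS_eq_zero_iff (S := C.sc i) ⟨Te z.1, hTmem z⟩).mp h0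
      obtain ⟨a, haMo, hda⟩ := hbdry w (Te z.1) 0 ((hMi i).2.1 ⟨z.1, hz, rfl⟩)
        (Submodule.zero_mem _) (by rw [add_zero]; exact hw)
      obtain ⟨u, huMo, hTu⟩ := (hMi ((ComplexShape.up ℤ).prev i)).2.2.2.1 a haMo
      have hTdu : Te ((C.d ((ComplexShape.up ℤ).prev i) i).hom u) = Te z.1 := by
        show (T.f i).hom _ = _
        rw [← hcomm, hTu, hda]
      have hsub : Te (z.1 - (C.d ((ComplexShape.up ℤ).prev i) i).hom u) = 0 := by
        rw [map_sub, hTdu, sub_self]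
      have hmem : z.1 - (C.d ((ComplexShape.up ℤ).prev i) i).hom u ∈ Mo i :=
        sub_mem hz (hdo _ _ ⟨u, huMo, rfl⟩)
      have hz_eq : z.1 = (C.d ((ComplexShape.up ℤ).prev i) i).hom u := by
        have := (hMi i).2.2.2.2.1 _ hmem hsub
        rwa [sub_eq_zero] at this
      exact (piS_eq_zero_iff (S := C.sc i) z).mpr ⟨u, hz_eq.symm⟩
    · intro n
      obtain ⟨k, hk⟩ := Ideal.exists_pow_inf_eq_pow_smul (maximalIdeal R)
        (Z : Submodule R (C.X i))
      obtain ⟨N, hN⟩ := (hMi i).2.2.2.2.2 (n + k)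
      refine ⟨N, ?_⟩
      rintro _ ⟨x, hx, rfl⟩
      obtain ⟨z, hzMn, rfl⟩ := hx
      rw [hnatpow N z]
      have h1 : (Te ^ N) z.1 ∈ (maximalIdeal R) ^ (n + k) • Mn i := hN ⟨z.1, hzMn, rfl⟩
      have h2 : (Te ^ N) z.1 ∈ ((maximalIdeal R) ^ (n + k) • ⊤ ⊓ Z : Submodule R (C.X i)) :=
        ⟨Submodule.smul_mono le_rfl le_top h1, hTmempow N z⟩
      have h3 : (Te ^ N) z.1 ∈ (maximalIdeal R) ^ n • (Z : Submodule R (C.X i)) := by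
        rw [hk (n + k) (by omega)] at h2
        have hle : (maximalIdeal R) ^ (n + k - k) •
            ((maximalIdeal R) ^ k • ⊤ ⊓ Z : Submodule R (C.X i)) ≤
            (maximalIdeal R) ^ n • Z := by
          rw [Nat.add_sub_cancel]
          exact Submodule.smul_mono le_rfl inf_le_right
        exact hle h2
      have h4 : (⟨(Te ^ N) z.1, hTmempow N z⟩ : ↥Z) ∈
          (maximalIdeal R) ^ n • (⊤ : Submodule R ↥Z) := by
        have heq : (maximalIdeal R) ^ n • (Z : Submodule R (C.X i)) =
            Submodule.map Z.subtype ((maximalIdeal R) ^ n • ⊤) := by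
          rw [Submodule.map_smul'', Submodule.map_top, Submodule.range_subtype]
        rw [heq] at h3
        obtain ⟨y, hy, hyv⟩ := h3
        have hy_eq : y = ⟨(Te ^ N) z.1, hTmempow N z⟩ := Subtype.ext hyv
        rwa [← hy_eq]
      have h5 : π ⟨(Te ^ N) z.1, hTmempow N z⟩ ∈
          (maximalIdeal R) ^ n • (⊤ : Submodule R ↥(C.homology i)) := by
        have hmap : π ⟨(Te ^ N) z.1, hTmempow N z⟩ ∈
            Submodule.map π ((maximalIdeal R) ^ n • (⊤ : Submodule R ↥Z)) := ⟨_, h4, rfl⟩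
        rw [Submodule.map_smul''] at hmap
        exact Submodule.smul_mono le_rfl le_top hmap
      have h6 : π ⟨(Te ^ N) z.1, hTmempow N z⟩ ∈ Hn :=
        ⟨⟨(Te ^ N) z.1, hTmempow N z⟩,
          map_pow_le (hMi i).2.2.1 N ⟨z.1, hzMn, rfl⟩, rfl⟩
      exact compl_smul_inf hcompl _ h5 h6
  refine ⟨Ho, Hn, hmain, ?_, ?_⟩
  · exact subcx_homology_equiv C Mo Mn hdo hdn (fun j => (hMi j).1) i Ho rfl
  · exact subcx_homology_equiv C Mn Mo hdn hdo (fun j => (hMi j).1.symm) i Hn rfl
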